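/- For every finite subset I ⊆ C, every vI ∈ Seq(I), and every s ∈ {1,…,n}, the element [f_{vI}] lies in U(𝔫)_I and B_I(z_s)([f_{vI}]) = A_{vI}(t_I) · ∑_{i ∈ I} a(i,s)/(t_i − z_s) in ℂ(t). -/

import Mathlib

/- STATEMENT 3.
`𝔫` is the free Lie algebra on generators `f i`, `i ∈ C`, and `U(𝔫)` is identified with the
free associative algebra `FreeAlgebra ℂ C` (the bracket being the commutator).  For a nodup
list `vI = (i₁,…,i_N)` enumerating `I ⊆ C`, `f_{vI} = f_{i_N}⋯f_{i₁}` (`mono vI`) and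
`[f_{vI}] = ad(f_{i_N})∘⋯∘ad(f_{i₂})(f_{i₁})` (`brkt vI`).  `U(𝔫)_I` is the span of the
monomials `f_{vJ}`, `vJ ∈ Seq(I)` (permutations of `vI`), and `B_I(z_s)` is the linear map
determined by `f_{vJ} ↦ B_{vJ}(t_I;z_s)`.  The theorem: `[f_{vI}] ∈ U(𝔫)_I` and
`B_I(z_s)([f_{vI}]) = A_{vI}(t_I) · ∑_{i∈I} a(i,s)/(t_i − z_s)`. -/

noncomputable section

abbrev FF (C : Type) := FractionRing (MvPolynomial C ℂ)

def tv {C : Type} (i : C) : FF C := algebraMap (MvPolynomial C ℂ) (FF C) (MvPolynomial.X i)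

def cc {C : Type} (w : ℂ) : FF C := algebraMap (MvPolynomial C ℂ) (FF C) (MvPolynomial.C w)

/-- `A_{vI}(t_I) = ∏_{p=2}^N ( ∑_{q<p} a(i_p,i_q)/(t_{i_p} − t_{i_q}) )`. -/
def Afun {C : Type} (a : C → C → ℂ) (l : List C) : FF C :=
  ∏ p : Fin l.length, if p.val = 0 then 1 else
    ∑ q : Fin l.length, if q < p then
      cc (a (l.get p) (l.get q)) / (tv (l.get p) - tv (l.get q)) else 0

/-- `B_{vI}(t_I; z_s) = ∏_{p=1}^N ( a(i_p,s)/(t_{i_p} − z_s) + ∑_{q<p} a(i_p,i_q)/(t_{i_p} − t_{i_q}) )`. -/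
def Bfun {C : Type} (a : C → C → ℂ) (b : C → ℂ) (z : ℂ) (l : List C) : FF C :=
  ∏ p : Fin l.length,
    (cc (b (l.get p)) / (tv (l.get p) - cc z)
      + ∑ q : Fin l.length, if q < p then
          cc (a (l.get p) (l.get q)) / (tv (l.get p) - tv (l.get q)) else 0)

/-- The generator `f i` of `U(𝔫) = FreeAlgebra ℂ C`. -/
def fgen {C : Type} (i : C) : FreeAlgebra ℂ C := FreeAlgebra.ι ℂ i

/-- The monomial `f_{vI} = f_{i_N}·f_{i_{N−1}}⋯f_{i₁}` for `vI = (i₁,…,i_N)`. -/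
def mono {C : Type} (l : List C) : FreeAlgebra ℂ C := (l.reverse.map fgen).prod

def brktRev {C : Type} : List C → FreeAlgebra ℂ C
  | [] => 0
  | [i] => fgen i
  | i :: tl => ⁅fgen i, brktRev tl⁆

/-- The commutator `[f_{vI}] = ad(f_{i_N})∘⋯∘ad(f_{i₂})(f_{i₁})` for `vI = (i₁,…,i_N)`,
computed inside `U(𝔫)` (where the bracket of the Lie ring structure is the commutator). -/
def brkt {C : Type} (l : List C) : FreeAlgebra ℂ C := brktRev l.reverse

namespace S3aux

variable {C : Type}

lemma div_neg'' (u v : FF C) : u / -v = -(u / v) := div_neg u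

def mfun (a : C → C → ℂ) (k : C) (l : List C) : FF C :=
  (l.map fun i => cc (a k i) / (tv k - tv i)).sum

def Bg (a : C → C → ℂ) : (C → FF C) → List C → FF C
  | _, [] => 1
  | β, k :: w => β k * Bg a (fun i => β i + cc (a i k) / (tv i - tv k)) w

def BgF (a : C → C → ℂ) (β : C → FF C) (l : List C) : FF C :=
  ∏ p : Fin l.length,
    (β (l.get p) + ∑ q : Fin l.length, if q < p then
        cc (a (l.get p) (l.get q)) / (tv (l.get p) - tv (l.get q)) else 0)

lemma BgF_cons (a : C → C → ℂ) (β : C → FF C) (k : C) (w : List C) :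
    BgF a β (k :: w) = β k * BgF a (fun i => β i + cc (a i k) / (tv i - tv k)) w := by
  unfold BgF
  refine Eq.trans (Fin.prod_univ_succ _) ?_
  congr 1
  · simp
  · apply Finset.prod_congr rfl
    intro p _
    refine Eq.trans (congrArg _ (Fin.sum_univ_succ _)) ?_
    simp [Fin.succ_lt_succ_iff, Fin.succ_pos, add_assoc]

lemma BgF_eq_Bg (a : C → C → ℂ) (l : List C) : ∀ β, BgF a β l = Bg a β l := by
  induction l with
  | nil => intro β; simp [BgF, Bg]
  | cons k w ih => intro β; rw [BgF_cons, ih, Bg]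

lemma Bfun_eq_Bg (a : C → C → ℂ) (b : C → ℂ) (z : ℂ) (l : List C) :
    Bfun a b z l = Bg a (fun i => cc (b i) / (tv i - cc z)) l := by
  rw [← BgF_eq_Bg]; rfl

lemma Bg_append (a : C → C → ℂ) (k : C) (w : List C) : ∀ β,
    Bg a β (w ++ [k]) = Bg a β w * (β k + mfun a k w) := by
  induction w with
  | nil => intro β; simp [Bg, mfun]
  | cons x w ih =>
      intro β
      rw [List.cons_append, Bg, ih, Bg]
      simp only [mfun, List.map_cons, List.sum_cons]
      ring

lemma Afun_cons (a : C → C → ℂ) (j : C) (w : List C) :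
    Afun a (j :: w) = BgF a (fun i => cc (a i j) / (tv i - tv j)) w := by
  unfold Afun BgF
  refine Eq.trans (Fin.prod_univ_succ _) ?_
  simp only [Fin.val_zero, if_true, eq_self_iff_true, one_mul]
  apply Finset.prod_congr rfl
  intro p _
  rw [if_neg (by simp)]
  refine Eq.trans (Fin.sum_univ_succ _) ?_
  simp [Fin.succ_lt_succ_iff, Fin.succ_pos, add_assoc]

lemma Afun_nil (a : C → C → ℂ) : Afun a [] = 1 := by simp [Afun]

lemma Afun_single (a : C → C → ℂ) (k : C) : Afun a [k] = 1 := by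
  rw [Afun_cons]; simp [BgF]

lemma mfun_cons (a : C → C → ℂ) (k x : C) (w : List C) :
    mfun a k (x :: w) = cc (a k x) / (tv k - tv x) + mfun a k w := by
  simp [mfun]

lemma Afun_append (a : C → C → ℂ) (k j : C) (w : List C) :
    Afun a ((j :: w) ++ [k]) = Afun a (j :: w) * mfun a k (j :: w) := by
  rw [List.cons_append, Afun_cons, BgF_eq_Bg, Bg_append, ← BgF_eq_Bg, ← Afun_cons, mfun_cons]


lemma mono_nil : (mono ([] : List C)) = 1 := rfl

lemma mono_append (k : C) (w : List C) : mono (w ++ [k]) = fgen k * mono w := by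
  simp [mono, List.reverse_append]

lemma mono_single (k : C) : mono [k] = fgen k := by simp [mono]

lemma mono_cons (k : C) (w : List C) : mono (k :: w) = mono w * fgen k := by
  simp [mono]

lemma equiv_prod (r : List C) :
    FreeAlgebra.equivMonoidAlgebraFreeMonoid (R := ℂ) (X := C) ((r.map fgen).prod)
      = MonoidAlgebra.single (FreeMonoid.ofList r) 1 := by
  induction r with
  | nil =>
      simp only [List.map_nil, List.prod_nil, map_one]
      rfl
  | cons x r ih =>
      rw [List.map_cons, List.prod_cons, map_mul, ih]
      have hx : FreeAlgebra.equivMonoidAlgebraFreeMonoid (R := ℂ) (X := C) (fgen x)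
          = MonoidAlgebra.single (FreeMonoid.of x) 1 := by
        simp [FreeAlgebra.equivMonoidAlgebraFreeMonoid, fgen]
      rw [hx, MonoidAlgebra.single_mul_single, one_mul, FreeMonoid.ofList_cons]

lemma basis_eq (r : List C) :
    FreeAlgebra.basisFreeMonoid ℂ C (FreeMonoid.ofList r) = (r.map fgen).prod := by
  rw [FreeAlgebra.basisFreeMonoid, Module.Basis.map_apply]
  apply (FreeAlgebra.equivMonoidAlgebraFreeMonoid (R := ℂ) (X := C)).injective
  rw [equiv_prod]
  rw [LinearEquiv.symm_trans_apply]
  exact (AlgEquiv.apply_symm_apply _ _).trans (by rfl)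

def T (a : C → C → ℂ) (β : C → FF C) : FreeAlgebra ℂ C →ₗ[ℂ] FF C :=
  (FreeAlgebra.basisFreeMonoid ℂ C).constr ℂ fun w => Bg a β (FreeMonoid.toList w).reverse

lemma T_mono (a : C → C → ℂ) (β : C → FF C) (w : List C) : T a β (mono w) = Bg a β w := by
  have h : mono w = FreeAlgebra.basisFreeMonoid ℂ C (FreeMonoid.ofList w.reverse) := by
    rw [basis_eq]; rfl
  rw [h, T, Module.Basis.constr_basis]
  simp [FreeMonoid.toList_ofList]


def spn (l : List C) : Submodule ℂ (FreeAlgebra ℂ C) :=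
  Submodule.span ℂ (mono '' {w | w.Perm l})

lemma mem_spn_of_perm {w l : List C} (h : w.Perm l) : mono w ∈ spn l :=
  Submodule.subset_span ⟨w, h, rfl⟩

lemma mul_left_mem (k : C) {l : List C} {x : FreeAlgebra ℂ C} (hx : x ∈ spn l) :
    fgen k * x ∈ spn (l ++ [k]) := by
  induction hx using Submodule.span_induction with
  | mem x h =>
      obtain ⟨w, hw, rfl⟩ := h
      rw [← mono_append]
      exact mem_spn_of_perm (hw.append_right [k])
  | zero => simp
  | add x y _ _ hx hy => rw [mul_add]; exact add_mem hx hy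
  | smul c x _ hx => rw [mul_smul_comm]; exact Submodule.smul_mem _ _ hx

lemma mul_right_mem (k : C) {l : List C} {x : FreeAlgebra ℂ C} (hx : x ∈ spn l) :
    x * fgen k ∈ spn (l ++ [k]) := by
  induction hx using Submodule.span_induction with
  | mem x h =>
      obtain ⟨w, hw, rfl⟩ := h
      rw [← mono_cons]
      exact mem_spn_of_perm ((hw.cons k).trans (List.perm_append_singleton k l).symm)
  | zero => simp
  | add x y _ _ hx hy => rw [add_mul]; exact add_mem hx hy
  | smul c x _ hx => rw [smul_mul_assoc]; exact Submodule.smul_mem _ _ hx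

lemma brkt_nil : brkt ([] : List C) = 0 := rfl

lemma brkt_single (k : C) : brkt [k] = fgen k := rfl

lemma brkt_append {l : List C} (hl : l ≠ []) (k : C) :
    brkt (l ++ [k]) = fgen k * brkt l - brkt l * fgen k := by
  obtain ⟨x, xs, hx⟩ := List.exists_cons_of_ne_nil (mt List.reverse_eq_nil_iff.mp hl)
  unfold brkt
  rw [List.reverse_append, List.reverse_singleton, List.singleton_append, hx, brktRev,
    Ring.lie_def]
  simp

lemma brkt_mem_spn : ∀ l : List C, brkt l ∈ spn l := by
  intro l
  induction l using List.reverseRecOn with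
  | nil => rw [brkt_nil]; exact zero_mem _
  | append_singleton l k ih =>
      rcases eq_or_ne l [] with rfl | hl
      · rw [List.nil_append, brkt_single, ← mono_single]
        exact mem_spn_of_perm (List.Perm.refl _)
      · rw [brkt_append hl k]
        exact sub_mem (mul_left_mem k ih) (mul_right_mem k ih)

lemma mfun_perm (a : C → C → ℂ) (k : C) {w l : List C} (h : w.Perm l) :
    mfun a k w = mfun a k l := (h.map _).sum_eq

lemma T_mul_left (a : C → C → ℂ) (β : C → FF C) (k : C) {l : List C}
    {x : FreeAlgebra ℂ C} (hx : x ∈ spn l) :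
    T a β (fgen k * x) = (β k + mfun a k l) * T a β x := by
  induction hx using Submodule.span_induction with
  | mem x h =>
      obtain ⟨w, hw, rfl⟩ := h
      rw [← mono_append, T_mono, T_mono, Bg_append, mfun_perm a k hw, mul_comm]
  | zero => simp
  | add x y _ _ hx hy => rw [mul_add, map_add, map_add, hx, hy, mul_add]
  | smul c x _ hx => rw [mul_smul_comm, map_smul, map_smul, hx, mul_smul_comm]

lemma T_mul_right (a : C → C → ℂ) (β : C → FF C) (k : C) {l : List C}
    {x : FreeAlgebra ℂ C} (hx : x ∈ spn l) :
    T a β (x * fgen k) = β k * T a (fun i => β i + cc (a i k) / (tv i - tv k)) x := by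
  induction hx using Submodule.span_induction with
  | mem x h =>
      obtain ⟨w, hw, rfl⟩ := h
      rw [← mono_cons, T_mono, T_mono, Bg]
  | zero => simp
  | add x y _ _ hx hy => rw [add_mul, map_add, map_add, hx, hy, mul_add]
  | smul c x _ hx => rw [smul_mul_assoc, map_smul, map_smul, hx, mul_smul_comm]

lemma sum_map_add' (β g : C → FF C) (l : List C) :
    (l.map fun i => β i + g i).sum = (l.map β).sum + (l.map g).sum := by
  induction l with
  | nil => simp
  | cons x l ih => simp [ih]; ring

lemma sum_map_flip (a : C → C → ℂ) (ha : ∀ i j, a i j = a j i) (k : C) (l : List C) :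
    (l.map fun i => cc (a i k) / (tv i - tv k)).sum = - mfun a k l := by
  unfold mfun
  induction l with
  | nil => simp
  | cons x l ih =>
      simp only [List.map_cons, List.sum_cons, ih, ha x k]
      rw [show tv x - tv k = -(tv k - tv x) by ring, div_neg'']
      ring

lemma master (a : C → C → ℂ) (ha : ∀ i j, a i j = a j i) :
    ∀ l : List C, l ≠ [] → ∀ β : C → FF C,
      T a β (brkt l) = Afun a l * (l.map β).sum := by
  intro l
  induction l using List.reverseRecOn with
  | nil => intro h; exact absurd rfl h
  | append_singleton l k ih =>
      intro _ β
      rcases eq_or_ne l [] with rfl | hl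
      · rw [List.nil_append, brkt_single, ← mono_single, T_mono, Afun_single]
        simp [Bg]
      · obtain ⟨j, w, rfl⟩ := List.exists_cons_of_ne_nil hl
        rw [brkt_append hl k, map_sub,
          T_mul_left a β k (brkt_mem_spn _), T_mul_right a β k (brkt_mem_spn _),
          ih hl β, ih hl (fun i => β i + cc (a i k) / (tv i - tv k)),
          Afun_append, List.map_append, List.sum_append, sum_map_add',
          sum_map_flip a ha k]
        simp only [List.map_singleton, List.sum_singleton]
        ring

end S3aux

theorem statement3 {C : Type} [Fintype C] [DecidableEq C]
    (n : ℕ) (hn : 1 ≤ n) (z : Fin n → ℂ) (hz : Function.Injective z)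
    (a : C → C → ℂ) (ha : ∀ i j, a i j = a j i) (b : C → Fin n → ℂ)
    (vI : List C) (hnd : vI.Nodup) (s : Fin n) :
    brkt vI ∈ Submodule.span ℂ (mono '' {l | l ∈ vI.permutations}) ∧
      ∀ φ : FreeAlgebra ℂ C →ₗ[ℂ] FF C,
        (∀ vJ ∈ vI.permutations.toFinset, φ (mono vJ) = Bfun a (fun i => b i s) (z s) vJ) →
        φ (brkt vI)
          = Afun a vI * ∑ i ∈ vI.toFinset, cc (b i s) / (tv i - cc (z s)) := by

  have hset : (mono '' {l | l ∈ vI.permutations} : Set (FreeAlgebra ℂ C))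
      = mono '' {w | w.Perm vI} := by
    ext w
    simp [List.mem_permutations]
  constructor
  · show brkt vI ∈ Submodule.span ℂ (mono '' {l | l ∈ vI.permutations})
    rw [hset]
    exact S3aux.brkt_mem_spn vI
  · intro φ hφ
    have hagree : ∀ x ∈ S3aux.spn vI,
        φ x = S3aux.T a (fun i => cc (b i s) / (tv i - cc (z s))) x := by
      intro x hx
      induction hx using Submodule.span_induction with
      | mem x h =>
          obtain ⟨w, hw, rfl⟩ := h
          rw [S3aux.T_mono, ← S3aux.Bfun_eq_Bg]
          exact hφ w (by rw [List.mem_toFinset, List.mem_permutations]; exact hw)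
      | zero => simp
      | add x y _ _ hx hy => rw [map_add, map_add, hx, hy]
      | smul c x _ hx => rw [map_smul, map_smul, hx]
    rcases eq_or_ne vI [] with rfl | hvI
    · simp [brkt, brktRev, S3aux.Afun_nil]
    · rw [hagree _ (S3aux.brkt_mem_spn vI),
        S3aux.master a ha vI hvI (fun i => cc (b i s) / (tv i - cc (z s))),
        List.sum_toFinset _ hnd]

end
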